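/- arXiv:0711.0879 — 3 statements merged into one kernel-verified Lean document; each statement's English description precedes it below -/
import Mathlib

section
/- Let (x₊(t,z), ξ₊(t,z)) be a smooth family of energy-E₀ Hamiltonian trajectories of p = |ξ|²/2 + V such that ξ₊(t,z) → 0 and ∂_z x₊(t,z) → 0 as t → -∞, and x₊(0,z) = z. Then the action S₊(z) = ∫_{-∞}^{0} ( (1/2)|ξ₊(t,z)|² + E₀ - V(x₊(t,z)) ) dt satisfies ∂_z S₊(z) = ξ₊(0,z). Consequently the Lagrangian manifold {(x₊(0,z), ξ₊(0,z))} is the graph of ∇S₊. -/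
open scoped RealInnerProductSpace
open Filter MeasureTheory

/-- For a family of energy-E₀ Hamiltonian trajectories with x₊(0,z) = z, ξ₊(t,z) → 0 and
∂_z x₊(t,z) → 0 as t → -∞, the action S₊(z) = ∫_{-∞}^0 ((1/2)|ξ₊|² + E₀ - V(x₊)) dt
satisfies ∇S₊(z) = ξ₊(0,z): the directional derivative of S₊ in direction v is ⟨ξ₊(0,z), v⟩. -/
theorem gradient_of_action_is_momentum {n : ℕ}
    (V : EuclideanSpace ℝ (Fin n) → ℝ) (hV : ContDiff ℝ (⊤ : ℕ∞) V)
    (E₀ : ℝ)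
    (x ξ : ℝ → EuclideanSpace ℝ (Fin n) → EuclideanSpace ℝ (Fin n))
    (hsm : ContDiff ℝ (⊤ : ℕ∞)
      (fun q : ℝ × EuclideanSpace ℝ (Fin n) => (x q.1 q.2, ξ q.1 q.2)))
    (hx : ∀ t z, HasDerivAt (fun t' => x t' z) (ξ t z) t)
    (hξ : ∀ t z, HasDerivAt (fun t' => ξ t' z) (-(gradient V (x t z))) t)
    (hE : ∀ t z, ‖ξ t z‖ ^ 2 / 2 + V (x t z) = E₀)
    (hx0 : ∀ z, x 0 z = z)
    (S : EuclideanSpace ℝ (Fin n) → ℝ)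
    (hS : ∀ z, S z = ∫ t in Set.Iic (0 : ℝ), (‖ξ t z‖ ^ 2 / 2 + E₀ - V (x t z)))
    (z : EuclideanSpace ℝ (Fin n))
    (hdecay1 : Tendsto (fun t => ξ t z) atBot (nhds 0))
    (hdecay2 : ∀ v : EuclideanSpace ℝ (Fin n),
      Tendsto (fun t => deriv (fun s : ℝ => x t (z + s • v)) 0) atBot (nhds 0))
    (hint : ∀ v : EuclideanSpace ℝ (Fin n),
      IntegrableOn (fun t =>
        deriv (fun s : ℝ => ‖ξ t (z + s • v)‖ ^ 2 / 2 + E₀ - V (x t (z + s • v))) 0)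
        (Set.Iic (0 : ℝ)))
    (hDUI : ∀ v : EuclideanSpace ℝ (Fin n),
      HasDerivAt (fun s : ℝ => S (z + s • v))
        (∫ t in Set.Iic (0 : ℝ),
          deriv (fun s : ℝ => ‖ξ t (z + s • v)‖ ^ 2 / 2 + E₀ - V (x t (z + s • v))) 0) 0) :
    ∀ v : EuclideanSpace ℝ (Fin n),
      HasDerivAt (fun s : ℝ => S (z + s • v)) ⟪ξ 0 z, v⟫ 0 := by
  intro v
  have hVd : Differentiable ℝ V := hV.differentiable (by simp)
  -- joint maps on ℝ × ℝ
  set L : ℝ × ℝ → ℝ × EuclideanSpace ℝ (Fin n) := fun p => (p.1, z + p.2 • v) with hLdef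
  have hLc : ContDiff ℝ (⊤ : ℕ∞) L :=
    contDiff_fst.prodMk (contDiff_const.add (contDiff_snd.smul contDiff_const))
  set f : ℝ × ℝ → EuclideanSpace ℝ (Fin n) := fun p => x p.1 (z + p.2 • v) with hfdef
  set g : ℝ × ℝ → EuclideanSpace ℝ (Fin n) := fun p => ξ p.1 (z + p.2 • v) with hgdef
  have hf : ContDiff ℝ (⊤ : ℕ∞) f := (hsm.fst).comp hLc
  have hg : ContDiff ℝ (⊤ : ℕ∞) g := (hsm.snd).comp hLc
  have hfd : Differentiable ℝ f := hf.differentiable (by simp)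
  have hgd : Differentiable ℝ g := hg.differentiable (by simp)
  have hDf_diff : Differentiable ℝ (fderiv ℝ f) := by
    have : ContDiff ℝ (⊤ : ℕ∞) (fderiv ℝ f) := hf.fderiv_right (by exact_mod_cast le_top)
    exact this.differentiable (by simp)
  -- time derivative gives the momentum
  have key1 : ∀ p : ℝ × ℝ, fderiv ℝ f p ((1 : ℝ), (0 : ℝ)) = g p := by
    intro p
    have h1 : HasDerivAt (fun t => f (t, p.2)) (fderiv ℝ f p ((1 : ℝ), (0 : ℝ))) p.1 :=
      by have := (hfd p).hasFDerivAt.comp_hasDerivAt p.1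
          ((hasDerivAt_id p.1).prodMk (hasDerivAt_const p.1 p.2)); exact this
    exact h1.unique (hx p.1 (z + p.2 • v))
  have key2 : ∀ p : ℝ × ℝ, fderiv ℝ g p ((1 : ℝ), (0 : ℝ)) = -(gradient V (f p)) := by
    intro p
    have h1 : HasDerivAt (fun t => g (t, p.2)) (fderiv ℝ g p ((1 : ℝ), (0 : ℝ))) p.1 :=
      by have := (hgd p).hasFDerivAt.comp_hasDerivAt p.1
          ((hasDerivAt_id p.1).prodMk (hasDerivAt_const p.1 p.2)); exact this
    exact h1.unique (hξ p.1 (z + p.2 • v))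
  -- Clairaut / symmetry of second derivatives
  have hsymm : ∀ p : ℝ × ℝ,
      fderiv ℝ (fderiv ℝ f) p ((0 : ℝ), (1 : ℝ)) ((1 : ℝ), (0 : ℝ)) =
      fderiv ℝ (fderiv ℝ f) p ((1 : ℝ), (0 : ℝ)) ((0 : ℝ), (1 : ℝ)) := fun p =>
    second_derivative_symmetric (fun y => (hfd y).hasFDerivAt) (hDf_diff p).hasFDerivAt _ _
  have key3 : ∀ p : ℝ × ℝ, fderiv ℝ g p ((0 : ℝ), (1 : ℝ)) =
      fderiv ℝ (fderiv ℝ f) p ((0 : ℝ), (1 : ℝ)) ((1 : ℝ), (0 : ℝ)) := by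
    intro p
    have he : g = fun q => fderiv ℝ f q ((1 : ℝ), (0 : ℝ)) := funext fun q => (key1 q).symm
    have h2 : HasFDerivAt (fun q => fderiv ℝ f q ((1 : ℝ), (0 : ℝ)))
        ((ContinuousLinearMap.apply ℝ (EuclideanSpace ℝ (Fin n)) ((1 : ℝ), (0 : ℝ))).comp
          (fderiv ℝ (fderiv ℝ f) p)) p :=
      (ContinuousLinearMap.apply ℝ (EuclideanSpace ℝ (Fin n))
        ((1 : ℝ), (0 : ℝ))).hasFDerivAt.comp p (hDf_diff p).hasFDerivAt
    rw [he, h2.fderiv]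
    rfl
  -- t-derivative of ∂ₛ x
  have hXs' : ∀ t : ℝ, HasDerivAt (fun t' => fderiv ℝ f (t', 0) ((0 : ℝ), (1 : ℝ)))
      (fderiv ℝ g (t, 0) ((0 : ℝ), (1 : ℝ))) t := by
    intro t
    have hD2 : HasDerivAt (fun t' => fderiv ℝ f (t', 0))
        (fderiv ℝ (fderiv ℝ f) (t, 0) ((1 : ℝ), (0 : ℝ))) t :=
      (hDf_diff (t, 0)).hasFDerivAt.comp_hasDerivAt t
        ((hasDerivAt_id t).prodMk (hasDerivAt_const t (0 : ℝ)))
    have h3 := hD2.clm_apply (hasDerivAt_const t ((0 : ℝ), (1 : ℝ)))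
    have heq : fderiv ℝ g (t, 0) ((0 : ℝ), (1 : ℝ)) =
        fderiv ℝ (fderiv ℝ f) (t, 0) ((1 : ℝ), (0 : ℝ)) ((0 : ℝ), (1 : ℝ)) := by
      rw [key3 ((t, 0) : ℝ × ℝ)]; exact hsymm (t, 0)
    rw [heq]
    simpa using h3
  -- s-derivatives at s = 0
  have hsx : ∀ t : ℝ, HasDerivAt (fun s : ℝ => x t (z + s • v))
      (fderiv ℝ f (t, 0) ((0 : ℝ), (1 : ℝ))) 0 := by
    intro t
    have := (hfd (t, 0)).hasFDerivAt.comp_hasDerivAt_of_eq 0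
      ((hasDerivAt_const (0 : ℝ) t).prodMk (hasDerivAt_id 0)) (by simp)
    exact this
  have hsξ : ∀ t : ℝ, HasDerivAt (fun s : ℝ => ξ t (z + s • v))
      (fderiv ℝ g (t, 0) ((0 : ℝ), (1 : ℝ))) 0 := by
    intro t
    have := (hgd (t, 0)).hasFDerivAt.comp_hasDerivAt_of_eq 0
      ((hasDerivAt_const (0 : ℝ) t).prodMk (hasDerivAt_id 0)) (by simp)
    exact this
  -- derivative of the integrand in s
  have hIder : ∀ t : ℝ, HasDerivAt
      (fun s : ℝ => ‖ξ t (z + s • v)‖ ^ 2 / 2 + E₀ - V (x t (z + s • v)))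
      (⟪ξ t z, fderiv ℝ g (t, 0) ((0 : ℝ), (1 : ℝ))⟫ -
        ⟪gradient V (x t z), fderiv ℝ f (t, 0) ((0 : ℝ), (1 : ℝ))⟫) 0 := by
    intro t
    have h1 : HasDerivAt (fun s : ℝ => ‖ξ t (z + s • v)‖ ^ 2 / 2)
        ⟪ξ t z, fderiv ℝ g (t, 0) ((0 : ℝ), (1 : ℝ))⟫ 0 := by
      have h1 := (HasDerivAt.inner ℝ (hsξ t) (hsξ t)).div_const 2
      simp only [real_inner_self_eq_norm_sq, zero_smul, add_zero] at h1
      refine h1.congr_deriv ?_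
      rw [real_inner_comm (fderiv ℝ g (t, 0) ((0 : ℝ), (1 : ℝ))) (ξ t z)]
      ring
    have h2 : HasDerivAt (fun s : ℝ => V (x t (z + s • v)))
        ⟪gradient V (x t z), fderiv ℝ f (t, 0) ((0 : ℝ), (1 : ℝ))⟫ 0 := by
      have hgrad := ((hVd (x t z)).hasGradientAt).hasFDerivAt
      have := hgrad.comp_hasDerivAt_of_eq 0 (hsx t) (by simp)
      exact this.congr_deriv (by simp [InnerProductSpace.toDual_apply_apply])
    exact (h1.add_const E₀).sub h2
  have hderiv_eq : ∀ t : ℝ,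
      deriv (fun s : ℝ => ‖ξ t (z + s • v)‖ ^ 2 / 2 + E₀ - V (x t (z + s • v))) 0 =
      ⟪ξ t z, fderiv ℝ g (t, 0) ((0 : ℝ), (1 : ℝ))⟫ -
        ⟪gradient V (x t z), fderiv ℝ f (t, 0) ((0 : ℝ), (1 : ℝ))⟫ :=
    fun t => (hIder t).deriv
  -- the boundary function F
  set F : ℝ → ℝ := fun t => ⟪ξ t z, fderiv ℝ f (t, 0) ((0 : ℝ), (1 : ℝ))⟫ with hFdef
  have hFder : ∀ t : ℝ, HasDerivAt F
      (⟪ξ t z, fderiv ℝ g (t, 0) ((0 : ℝ), (1 : ℝ))⟫ -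
        ⟪gradient V (x t z), fderiv ℝ f (t, 0) ((0 : ℝ), (1 : ℝ))⟫) t := by
    intro t
    have h1 := HasDerivAt.inner ℝ (hξ t z) (hXs' t)
    simpa [inner_neg_left, sub_eq_add_neg] using h1
  have hFlim : Tendsto F atBot (nhds 0) := by
    have h2 : Tendsto (fun t : ℝ => fderiv ℝ f (t, 0) ((0 : ℝ), (1 : ℝ))) atBot (nhds 0) := by
      have he : (fun t : ℝ => fderiv ℝ f (t, 0) ((0 : ℝ), (1 : ℝ))) =
          fun t : ℝ => deriv (fun s : ℝ => x t (z + s • v)) 0 :=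
        funext fun t => ((hsx t).deriv).symm
      rw [he]; exact hdecay2 v
    simpa using hdecay1.inner (𝕜 := ℝ) h2
  have hint' : IntegrableOn (fun t : ℝ =>
      ⟪ξ t z, fderiv ℝ g (t, 0) ((0 : ℝ), (1 : ℝ))⟫ -
        ⟪gradient V (x t z), fderiv ℝ f (t, 0) ((0 : ℝ), (1 : ℝ))⟫) (Set.Iic (0 : ℝ)) := by
    have := hint v
    simpa only [hderiv_eq] using this
  have hFTC : (∫ t in Set.Iic (0 : ℝ),
      (⟪ξ t z, fderiv ℝ g (t, 0) ((0 : ℝ), (1 : ℝ))⟫ -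
        ⟪gradient V (x t z), fderiv ℝ f (t, 0) ((0 : ℝ), (1 : ℝ))⟫)) = F 0 - 0 :=
    MeasureTheory.integral_Iic_of_hasDerivAt_of_tendsto
      (hFder 0).continuousAt.continuousWithinAt (fun t _ => hFder t) hint' hFlim
  have hF0 : F 0 = ⟪ξ 0 z, v⟫ := by
    have hv : HasDerivAt (fun s : ℝ => x 0 (z + s • v)) v 0 := by
      have h : HasDerivAt (fun s : ℝ => z + s • v) v 0 := by
        exact ((hasDerivAt_const (0 : ℝ) z).add ((hasDerivAt_id (0 : ℝ)).smul_const v)).congr_deriv (by simp)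
      simpa only [hx0] using h
    have huniq := (hsx 0).unique hv
    simp only [hFdef]
    rw [huniq]
  have key : (∫ t in Set.Iic (0 : ℝ),
      deriv (fun s : ℝ => ‖ξ t (z + s • v)‖ ^ 2 / 2 + E₀ - V (x t (z + s • v))) 0) =
      ⟪ξ 0 z, v⟫ := by
    simp only [hderiv_eq]
    rw [hFTC, hF0, sub_zero]
  have h := hDUI v
  rwa [key] at h
end

section
/- Let Φ : ℝ × ℝⁿ → ℝ be smooth with Φ'_t + p(x, Φ'_x) = 0 (eikonal equation for p(x,ξ) = |ξ|²/2 + V(x)) and suppose exp(tH_p)(Φ'_θ(t,x,θ), θ) = (x, Φ'_x(t,x,θ)) for a smooth family. If at a point one has Φ''_{t,t} = 0, Φ''_{t,θ} = 0 and Φ''_{t,x} = 0 (the full first row of the mixed Hessian of ∂_tΦ vanishes), then H_p(y,θ) = 0 where y = Φ'_θ, i.e. (y,θ) is a critical point of p. -/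
open Set Metric Real Asymptotics


variable {E : Type*} [NormedAddCommGroup E] [InnerProductSpace ℝ E] [CompleteSpace E]

lemma swap_deriv_gradient (g : ℝ × E → ℝ) (hg : ContDiff ℝ (⊤ : ℕ∞) g) (t₀ : ℝ) (a₀ : E)
    (hcrit : fderiv ℝ (fun q : ℝ × E => deriv (fun t => g (t, q.2)) q.1) (t₀, a₀) = 0) :
    HasDerivAt (fun t => gradient (fun a => g (t, a)) a₀) (0 : E) t₀ := by
  have hone : (1 : WithTop ℕ∞) ≤ ((⊤ : ℕ∞) : WithTop ℕ∞) := by exact_mod_cast (le_top : (1 : ℕ∞) ≤ ⊤)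
  have htwo : (2 : WithTop ℕ∞) ≤ ((⊤ : ℕ∞) : WithTop ℕ∞) := by norm_cast
  have hsucc : ((⊤ : ℕ∞) : WithTop ℕ∞) + 1 ≤ ((⊤ : ℕ∞) : WithTop ℕ∞) := by
    exact_mod_cast (le_top : (⊤ : ℕ∞) + 1 ≤ ⊤)
  have hgdiff : Differentiable ℝ g := hg.differentiable (by simp)
  have hg1 : ContDiff ℝ (⊤ : ℕ∞) (fderiv ℝ g) := hg.fderiv_right hsucc
  set D2 : (ℝ × E) →L[ℝ] (ℝ × E) →L[ℝ] ℝ := fderiv ℝ (fderiv ℝ g) (t₀, a₀) with hD2def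
  have hD2' : HasFDerivAt (fderiv ℝ g) D2 (t₀, a₀) :=
    (hg1.differentiable (by simp) _).hasFDerivAt
  have hcurve : ∀ a : E, ∀ t : ℝ, HasDerivAt (fun t : ℝ => ((t, a) : ℝ × E)) ((1 : ℝ), (0 : E)) t :=
    fun a t => (hasDerivAt_id t).prodMk (hasDerivAt_const t a)
  have hDcurve : HasDerivAt (fun t => fderiv ℝ g (t, a₀)) (D2 (1, 0)) t₀ :=
    hD2'.comp_hasDerivAt (F := ℝ × E) (E := (ℝ × E) →L[ℝ] ℝ) t₀ (hcurve a₀ t₀)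
  set P : ((ℝ × E) →L[ℝ] ℝ) →L[ℝ] (E →L[ℝ] ℝ) :=
    (ContinuousLinearMap.compL ℝ E (ℝ × E) ℝ).flip (ContinuousLinearMap.inr ℝ ℝ E) with hPdef
  have hPapp : ∀ φ : (ℝ × E) →L[ℝ] ℝ, P φ = φ.comp (ContinuousLinearMap.inr ℝ ℝ E) := by
    intro φ
    rw [hPdef, ContinuousLinearMap.flip_apply, ContinuousLinearMap.compL_apply]
  have hsec : ∀ t : ℝ, gradient (fun a => g (t, a)) a₀
      = (InnerProductSpace.toDual ℝ E).symm (P (fderiv ℝ g (t, a₀))) := by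
    intro t
    have h1 : HasFDerivAt (fun a => g (t, a))
        ((fderiv ℝ g (t, a₀)).comp (ContinuousLinearMap.inr ℝ ℝ E)) a₀ :=
      (hgdiff (t, a₀)).hasFDerivAt.comp a₀ (hasFDerivAt_prodMk_right t a₀)
    show (InnerProductSpace.toDual ℝ E).symm (fderiv ℝ (fun a => g (t, a)) a₀) = _
    rw [h1.fderiv, hPapp]
  -- the second derivative row vanishes
  have hsym : IsSymmSndFDerivAt ℝ g (t₀, a₀) := hg.contDiffAt.isSymmSndFDerivAt (by simpa using htwo)
  have hFeq : (fun q : ℝ × E => deriv (fun t => g (t, q.2)) q.1)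
      = fun q => fderiv ℝ g q ((1 : ℝ), (0 : E)) := by
    funext q
    have h1 : HasDerivAt (fun t => g (t, q.2)) (fderiv ℝ g (q.1, q.2) ((1 : ℝ), (0 : E))) q.1 :=
      (hgdiff (q.1, q.2)).hasFDerivAt.comp_hasDerivAt q.1 (hcurve q.2 q.1)
    rw [h1.deriv]
  have happ : HasFDerivAt (fun q => fderiv ℝ g q ((1 : ℝ), (0 : E)))
      ((ContinuousLinearMap.apply ℝ ℝ ((1 : ℝ), (0 : E))).comp D2) (t₀, a₀) :=
    (ContinuousLinearMap.apply ℝ ℝ ((1 : ℝ), (0 : E))).hasFDerivAt.comp (t₀, a₀) hD2'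
  rw [hFeq, happ.fderiv] at hcrit
  have hkey : ∀ v : E, D2 (1, 0) (0, v) = 0 := by
    intro v
    have h1 : D2 (1, 0) (0, v) = D2 (0, v) (1, 0) := hsym.eq _ _
    have h2 := congrArg (fun L : (ℝ × E) →L[ℝ] ℝ => L ((0 : ℝ), v)) hcrit
    simpa using h1.trans h2
  have hP0 : P (D2 (1, 0)) = 0 := by
    ext v
    rw [hPapp]
    simpa using hkey v
  -- derivative of the dual-valued curve
  have base : HasDerivAt (fun t => P (fderiv ℝ g (t, a₀))) (0 : E →L[ℝ] ℝ) t₀ := by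
    have := P.hasFDerivAt.comp_hasDerivAt (F := (ℝ × E) →L[ℝ] ℝ) (E := E →L[ℝ] ℝ) t₀ hDcurve
    rw [hP0] at this
    exact this
  -- transfer through the isometry
  rw [hasDerivAt_iff_isLittleO] at base ⊢
  simp only [smul_zero, sub_zero] at base ⊢
  rw [← isLittleO_norm_left] at base ⊢
  have hnorm : ∀ t : ℝ, ‖gradient (fun a => g (t, a)) a₀ - gradient (fun a => g (t₀, a)) a₀‖
      = ‖P (fderiv ℝ g (t, a₀)) - P (fderiv ℝ g (t₀, a₀))‖ := by
    intro t
    rw [hsec t, hsec t₀, ← map_sub, (InnerProductSpace.toDual ℝ E).symm.norm_map]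
  simpa only [hnorm] using base


variable {G : Type*} [NormedAddCommGroup G] [NormedSpace ℝ G]

lemma flow_tube (w : G → G)
    (hw : ∀ R : ℝ, ∃ K : NNReal, LipschitzOnWith K w (closedBall (0 : G) R))
    (flow : ℝ → G → G)
    (h0 : ∀ ρ, flow 0 ρ = ρ)
    (hD : ∀ t ρ, HasDerivAt (fun s => flow s ρ) (w (flow t ρ)) t)
    (T : ℝ) (hT : 0 ≤ T) (ρ₀ : G) :
    ∃ C > 0, ∃ δ > 0, ∀ ρ, dist ρ ρ₀ ≤ δ → ∀ t ∈ Icc 0 T,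
      dist (flow t ρ) (flow t ρ₀) ≤ C * dist ρ ρ₀ := by
  have hcont : ∀ ρ, Continuous (fun s => flow s ρ) := fun ρ =>
    continuous_iff_continuousAt.2 fun t => (hD t ρ).continuousAt
  obtain ⟨R0, hR0⟩ : ∃ R0, ∀ t ∈ Icc 0 T, ‖flow t ρ₀‖ ≤ R0 :=
    isCompact_Icc.exists_bound_of_continuousOn (hcont ρ₀).continuousOn
  have hρ₀mem : ρ₀ = flow 0 ρ₀ := (h0 ρ₀).symm
  have hR0' : 0 ≤ R0 := le_trans (norm_nonneg _) (hR0 0 ⟨le_refl 0, hT⟩)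
  have hρ₀norm : ‖ρ₀‖ ≤ R0 := by rw [hρ₀mem]; exact hR0 0 ⟨le_refl 0, hT⟩
  obtain ⟨K, hK⟩ := hw (R0 + 2)
  set C : ℝ := exp ((K : ℝ) * T) with hCdef
  have hC1 : 1 ≤ C := one_le_exp (mul_nonneg K.2 hT)
  set δ : ℝ := exp (-((K : ℝ) * T)) / 2 with hδdef
  have hδpos : 0 < δ := by positivity
  have hδhalf : δ ≤ 1 / 2 := by
    rw [hδdef]
    have : exp (-((K : ℝ) * T)) ≤ 1 := exp_le_one_iff.2 (neg_nonpos.2 (mul_nonneg K.2 hT))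
    linarith
  refine ⟨C, lt_of_lt_of_le one_pos hC1, δ, hδpos, ?_⟩
  intro ρ hρ
  set A : Set ℝ := {t | t ∈ Icc 0 T ∧ ∀ s ∈ Icc 0 t, ‖flow s ρ‖ ≤ R0 + 1} with hAdef
  have hρnorm : ‖ρ‖ ≤ R0 + 1 / 2 := by
    have h1 : ‖ρ‖ - ‖ρ₀‖ ≤ ‖ρ - ρ₀‖ := norm_sub_norm_le ρ ρ₀
    rw [← dist_eq_norm] at h1
    have h2 := hρ.trans hδhalf
    linarith
  have h0A : (0 : ℝ) ∈ A := by
    refine ⟨⟨le_refl 0, hT⟩, ?_⟩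
    intro s hs
    have : s = 0 := le_antisymm hs.2 hs.1
    subst this
    rw [h0]
    linarith
  have hAne : A.Nonempty := ⟨0, h0A⟩
  have hAbdd : BddAbove A := ⟨T, fun x hx => hx.1.2⟩
  -- Gronwall estimate valid on [0, b] for any b ∈ A
  have gron : ∀ b ∈ A, ∀ t ∈ Icc (0 : ℝ) b,
      dist (flow t ρ) (flow t ρ₀) ≤ dist ρ ρ₀ * exp ((K : ℝ) * t) := by
    intro b hb t ht
    have hbT : b ∈ Icc (0 : ℝ) T := hb.1
    have key := dist_le_of_trajectories_ODE_of_mem (v := fun _ : ℝ => w)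
      (s := fun _ : ℝ => closedBall (0 : G) (R0 + 2)) (K := K) (a := 0) (b := b)
      (δ := dist ρ ρ₀)
      (fun _ _ => hK)
      (hcont ρ).continuousOn
      (fun u _ => (hD u ρ).hasDerivWithinAt)
      (fun u hu => by
        have := hb.2 u ⟨hu.1, hu.2.le⟩
        rw [mem_closedBall_zero_iff]
        linarith)
      (hcont ρ₀).continuousOn
      (fun u _ => (hD u ρ₀).hasDerivWithinAt)
      (fun u hu => by
        have := hR0 u ⟨hu.1, hu.2.le.trans hbT.2⟩
        rw [mem_closedBall_zero_iff]
        linarith)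
      (by rw [h0, h0])
    have := key t ht
    simpa using this
  -- bound inside A
  have hhalf : ∀ b ∈ A, ∀ t ∈ Icc (0 : ℝ) b, dist (flow t ρ) (flow t ρ₀) ≤ 1 / 2 := by
    intro b hb t ht
    have h1 := gron b hb t ht
    have h2 : exp ((K : ℝ) * t) ≤ exp ((K : ℝ) * T) :=
      exp_le_exp.2 (mul_le_mul_of_nonneg_left (ht.2.trans hb.1.2) K.2)
    have h3 : dist ρ ρ₀ * exp ((K : ℝ) * t) ≤ δ * exp ((K : ℝ) * T) :=
      mul_le_mul hρ h2 (exp_pos _).le hδpos.le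
    have h4 : δ * exp ((K : ℝ) * T) = 1 / 2 := by
      rw [hδdef, div_mul_eq_mul_div, exp_neg]
      field_simp
    linarith
  set τ := sSup A with hτdef
  have hτIcc : τ ∈ Icc (0 : ℝ) T := ⟨le_csSup hAbdd h0A, csSup_le hAne fun x hx => hx.1.2⟩
  have hτA : τ ∈ A := by
    refine ⟨hτIcc, ?_⟩
    intro s hs
    rcases eq_or_lt_of_le hs.2 with heq | hlt
    · -- s = τ : use continuity from the left
      rcases eq_or_lt_of_le hs.1 with h0s | h0s
      · rw [← h0s, h0]
        linarith
      · have htend : Filter.Tendsto (fun u => ‖flow u ρ‖) (nhdsWithin s (Iio s)) (nhds ‖flow s ρ‖) :=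
          (((hcont ρ).tendsto s).mono_left nhdsWithin_le_nhds).norm
        refine le_of_tendsto htend ?_
        have hmem : Ioo (0 : ℝ) s ∈ nhdsWithin s (Iio s) := Ioo_mem_nhdsLT_of_mem ⟨h0s, le_refl s⟩
        filter_upwards [hmem] with u hu
        obtain ⟨b, hbA, hub⟩ := exists_lt_of_lt_csSup hAne (heq ▸ hu.2)
        exact hbA.2 u ⟨hu.1.le, hub.le⟩
    · obtain ⟨b, hbA, hub⟩ := exists_lt_of_lt_csSup hAne hlt
      exact hbA.2 s ⟨hs.1, hub.le⟩
  have hτT : τ = T := by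
    by_contra hne
    have hlt : τ < T := lt_of_le_of_ne hτIcc.2 hne
    have h12 : ‖flow τ ρ‖ ≤ R0 + 1 / 2 := by
      have h1 := hhalf τ hτA τ ⟨hτIcc.1, le_refl τ⟩
      have h2 := hR0 τ hτIcc
      have h3 : ‖flow τ ρ‖ - ‖flow τ ρ₀‖ ≤ ‖flow τ ρ - flow τ ρ₀‖ := norm_sub_norm_le _ _
      rw [← dist_eq_norm] at h3
      linarith
    have hev : ∀ᶠ u in nhds τ, ‖flow u ρ‖ < R0 + 1 := by
      have htend : Filter.Tendsto (fun u => ‖flow u ρ‖) (nhds τ) (nhds ‖flow τ ρ‖) :=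
        ((hcont ρ).tendsto τ).norm
      exact htend.eventually_lt_const (by linarith)
    obtain ⟨ε, hε, hball⟩ := Metric.eventually_nhds_iff.1 hev
    set b' := min (τ + ε / 2) T with hb'def
    have hτb' : τ < b' := lt_min (by linarith) hlt
    have hb'A : b' ∈ A := by
      refine ⟨⟨hτIcc.1.trans hτb'.le, min_le_right _ _⟩, ?_⟩
      intro s hs
      rcases le_or_gt s τ with hsτ | hsτ
      · exact hτA.2 s ⟨hs.1, hsτ⟩
      · refine (hball ?_).le
        have hsb' : s ≤ τ + ε / 2 := hs.2.trans (min_le_left _ _)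
        rw [Real.dist_eq, abs_of_pos (by linarith)]
        linarith
    have := le_csSup hAbdd hb'A
    linarith
  intro t ht
  have h1 := gron T (hτT ▸ hτA) t ht
  have h2 : dist ρ ρ₀ * exp ((K : ℝ) * t) ≤ dist ρ ρ₀ * C :=
    mul_le_mul_of_nonneg_left (exp_le_exp.2 (mul_le_mul_of_nonneg_left ht.2 K.2)) dist_nonneg
  calc dist (flow t ρ) (flow t ρ₀) ≤ dist ρ ρ₀ * C := h1.trans h2
    _ = C * dist ρ ρ₀ := mul_comm _ _

lemma flow_tube_two (w : G → G)
    (hw : ∀ R : ℝ, ∃ K : NNReal, LipschitzOnWith K w (closedBall (0 : G) R))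
    (flow : ℝ → G → G)
    (h0 : ∀ ρ, flow 0 ρ = ρ)
    (hD : ∀ t ρ, HasDerivAt (fun s => flow s ρ) (w (flow t ρ)) t)
    (T : ℝ) (hT : 0 ≤ T) (ρ₀ : G) :
    ∃ C > 0, ∃ δ > 0, ∀ ρ, dist ρ ρ₀ ≤ δ → ∀ t ∈ Icc (-T) T,
      dist (flow t ρ) (flow t ρ₀) ≤ C * dist ρ ρ₀ := by
  obtain ⟨C₁, hC₁, δ₁, hδ₁, H₁⟩ := flow_tube w hw flow h0 hD T hT ρ₀
  set w' : G → G := fun x => -w x with hw'def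
  set flow' : ℝ → G → G := fun s ρ => flow (-s) ρ with hflow'def
  have h0' : ∀ ρ, flow' 0 ρ = ρ := by
    intro ρ
    rw [hflow'def]
    simp [h0]
  have hD' : ∀ t ρ, HasDerivAt (fun s => flow' s ρ) (w' (flow' t ρ)) t := by
    intro t ρ
    have h := ((hD (-t) ρ).scomp t (hasDerivAt_neg t) : HasDerivAt ((fun s => flow s ρ) ∘ (fun s : ℝ => -s)) _ t)
    simpa [hflow'def, hw'def, Function.comp_def] using h
  have hw' : ∀ R : ℝ, ∃ K : NNReal, LipschitzOnWith K w' (closedBall (0 : G) R) := by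
    intro R
    obtain ⟨K, hK⟩ := hw R
    refine ⟨K, fun x hx y hy => ?_⟩
    have := hK hx hy
    simpa [hw'def, edist_neg_neg] using this
  obtain ⟨C₂, hC₂, δ₂, hδ₂, H₂⟩ := flow_tube w' hw' flow' h0' hD' T hT ρ₀
  refine ⟨max C₁ C₂, lt_max_of_lt_left hC₁, min δ₁ δ₂, lt_min hδ₁ hδ₂, ?_⟩
  intro ρ hρ t ht
  rcases le_total 0 t with h | h
  · exact (H₁ ρ (hρ.trans (min_le_left _ _)) t ⟨h, ht.2⟩).trans
      (mul_le_mul_of_nonneg_right (le_max_left _ _) dist_nonneg)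
  · have h2 := H₂ ρ (hρ.trans (min_le_right _ _)) (-t) ⟨neg_nonneg.2 h, by linarith [ht.1]⟩
    have h3 : flow' (-t) ρ = flow t ρ := by rw [hflow'def]; simp
    have h4 : flow' (-t) ρ₀ = flow t ρ₀ := by rw [hflow'def]; simp
    rw [h3, h4] at h2
    exact h2.trans (mul_le_mul_of_nonneg_right (le_max_right _ _) dist_nonneg)


/-- If Φ solves the eikonal equation ∂ₜΦ + p(x,∂ₓΦ) = 0 with the flow relation
(x, ∂ₓΦ) = exp(tH_p)(∂_θΦ, θ), and at a point the full differential of ∂ₜΦ vanishes,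
then H_p(y, θ) = 0 where y = ∂_θΦ, i.e. (y,θ) is a critical point of p. -/
theorem vanishing_row_gives_critical_point {n : ℕ}
    (V : EuclideanSpace ℝ (Fin n) → ℝ) (hV : ContDiff ℝ (⊤ : ℕ∞) V)
    (flow : ℝ → EuclideanSpace ℝ (Fin n) × EuclideanSpace ℝ (Fin n) →
      EuclideanSpace ℝ (Fin n) × EuclideanSpace ℝ (Fin n))
    (hflow0 : ∀ ρ, flow 0 ρ = ρ)
    (hflowD : ∀ t ρ, HasDerivAt (fun s => flow s ρ)
      ((flow t ρ).2, -(gradient V (flow t ρ).1)) t)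
    (Φ : ℝ → EuclideanSpace ℝ (Fin n) → EuclideanSpace ℝ (Fin n) → ℝ)
    (hΦ : ContDiff ℝ (⊤ : ℕ∞)
      (fun q : ℝ × EuclideanSpace ℝ (Fin n) × EuclideanSpace ℝ (Fin n) =>
        Φ q.1 q.2.1 q.2.2))
    (heik : ∀ t x θ, deriv (fun t' => Φ t' x θ) t
      + (‖gradient (fun x' => Φ t x' θ) x‖ ^ 2 / 2 + V x) = 0)
    (hrel : ∀ t x θ, (x, gradient (fun x' => Φ t x' θ) x)
      = flow t (gradient (fun θ' => Φ t x θ') θ, θ))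
    (t₀ : ℝ) (x₀ θ₀ : EuclideanSpace ℝ (Fin n))
    (hcrit : fderiv ℝ
      (fun q : ℝ × EuclideanSpace ℝ (Fin n) × EuclideanSpace ℝ (Fin n) =>
        deriv (fun t' => Φ t' q.2.1 q.2.2) q.1) (t₀, x₀, θ₀) = 0) :
    θ₀ = 0 ∧ gradient V (gradient (fun θ' => Φ t₀ x₀ θ') θ₀) = 0 := by
  have hone : (1 : WithTop ℕ∞) ≤ ((⊤ : ℕ∞) : WithTop ℕ∞) := by
    exact_mod_cast (le_top : (1 : ℕ∞) ≤ ⊤)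
  have hsucc : ((⊤ : ℕ∞) : WithTop ℕ∞) + 1 ≤ ((⊤ : ℕ∞) : WithTop ℕ∞) := by
    exact_mod_cast (le_top : (⊤ : ℕ∞) + 1 ≤ ⊤)
  -- the Hamiltonian vector field is smooth
  have hgradV : ContDiff ℝ (⊤ : ℕ∞) (fun x => gradient V x) :=
    (InnerProductSpace.toDual ℝ (EuclideanSpace ℝ (Fin n))).symm.contDiff.comp
      (hV.fderiv_right hsucc)
  set w : (EuclideanSpace ℝ (Fin n) × EuclideanSpace ℝ (Fin n)) →
      (EuclideanSpace ℝ (Fin n) × EuclideanSpace ℝ (Fin n)) :=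
    fun ρ => (ρ.2, -gradient V ρ.1) with hwdef
  have hwC : ContDiff ℝ (⊤ : ℕ∞) w := by
    rw [hwdef]
    exact contDiff_snd.prodMk ((hgradV.comp contDiff_fst).neg)
  have hwlip : ∀ R : ℝ, ∃ K : NNReal, LipschitzOnWith K w
      (closedBall (0 : EuclideanSpace ℝ (Fin n) × EuclideanSpace ℝ (Fin n)) R) := by
    intro R
    obtain ⟨B, hB⟩ :=
      (isCompact_closedBall (0 : EuclideanSpace ℝ (Fin n) × EuclideanSpace ℝ (Fin n))
        R).exists_bound_of_continuousOn ((hwC.fderiv_right hsucc).continuous.continuousOn)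
    refine ⟨Real.toNNReal B, Convex.lipschitzOnWith_of_nnnorm_fderiv_le
      (fun x _ => (hwC.differentiable (by simp)).differentiableAt) (fun x hx => ?_)
      (convex_closedBall _ _)⟩
    have hb := hB x hx
    have hb0 : 0 ≤ B := le_trans (norm_nonneg _) hb
    rw [Real.le_toNNReal_iff_coe_le hb0]
    simpa using hb
  have hflowD' : ∀ t ρ, HasDerivAt (fun s => flow s ρ) (w (flow t ρ)) t := fun t ρ => hflowD t ρ
  -- differentiability of the "time derivative" function
  have hΦd : Differentiable ℝ
      (fun q : ℝ × EuclideanSpace ℝ (Fin n) × EuclideanSpace ℝ (Fin n) =>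
        Φ q.1 q.2.1 q.2.2) := hΦ.differentiable (by simp)
  have hΦ1 : ContDiff ℝ (⊤ : ℕ∞) (fderiv ℝ
      (fun q : ℝ × EuclideanSpace ℝ (Fin n) × EuclideanSpace ℝ (Fin n) =>
        Φ q.1 q.2.1 q.2.2)) := hΦ.fderiv_right hsucc
  have hFeq : (fun q : ℝ × EuclideanSpace ℝ (Fin n) × EuclideanSpace ℝ (Fin n) =>
        deriv (fun t' => Φ t' q.2.1 q.2.2) q.1)
      = fun q => fderiv ℝ
          (fun q : ℝ × EuclideanSpace ℝ (Fin n) × EuclideanSpace ℝ (Fin n) =>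
            Φ q.1 q.2.1 q.2.2) q
          ((1 : ℝ), (0 : EuclideanSpace ℝ (Fin n) × EuclideanSpace ℝ (Fin n))) := by
    funext q
    have h1 : HasDerivAt (fun t' => Φ t' q.2.1 q.2.2)
        (fderiv ℝ (fun q : ℝ × EuclideanSpace ℝ (Fin n) × EuclideanSpace ℝ (Fin n) =>
          Φ q.1 q.2.1 q.2.2) (q.1, q.2)
          ((1 : ℝ), (0 : EuclideanSpace ℝ (Fin n) × EuclideanSpace ℝ (Fin n)))) q.1 :=
      (hΦd (q.1, q.2)).hasFDerivAt.comp_hasDerivAt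
          (f := fun t' : ℝ => ((t', q.2) : ℝ × EuclideanSpace ℝ (Fin n) × EuclideanSpace ℝ (Fin n))) q.1
        ((hasDerivAt_id q.1).prodMk (hasDerivAt_const q.1 q.2))
    exact h1.deriv
  have hFd : DifferentiableAt ℝ
      (fun q : ℝ × EuclideanSpace ℝ (Fin n) × EuclideanSpace ℝ (Fin n) =>
        deriv (fun t' => Φ t' q.2.1 q.2.2) q.1) (t₀, x₀, θ₀) := by
    rw [hFeq]
    exact ((ContinuousLinearMap.apply ℝ ℝ
      ((1 : ℝ), (0 : EuclideanSpace ℝ (Fin n) × EuclideanSpace ℝ (Fin n)))).differentiable.comp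
      (hΦ1.differentiable (by simp))).differentiableAt
  have hFbig0 : HasFDerivAt
      (fun q : ℝ × EuclideanSpace ℝ (Fin n) × EuclideanSpace ℝ (Fin n) =>
        deriv (fun t' => Φ t' q.2.1 q.2.2) q.1) 0 (t₀, x₀, θ₀) :=
    hcrit ▸ hFd.hasFDerivAt
  -- critical point information for the θ-section
  have hcritθ : fderiv ℝ (fun q : ℝ × EuclideanSpace ℝ (Fin n) =>
      deriv (fun t => Φ t x₀ q.2) q.1) (t₀, θ₀) = 0 := by
    have hLθ : HasFDerivAt (fun q : ℝ × EuclideanSpace ℝ (Fin n) =>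
        ((q.1, (x₀, q.2)) : ℝ × EuclideanSpace ℝ (Fin n) × EuclideanSpace ℝ (Fin n)))
        ((ContinuousLinearMap.fst ℝ ℝ (EuclideanSpace ℝ (Fin n))).prod
          (((0 : (ℝ × EuclideanSpace ℝ (Fin n)) →L[ℝ] EuclideanSpace ℝ (Fin n))).prod
            (ContinuousLinearMap.snd ℝ ℝ (EuclideanSpace ℝ (Fin n))))) (t₀, θ₀) :=
      (hasFDerivAt_fst).prodMk ((hasFDerivAt_const x₀ (t₀, θ₀)).prodMk hasFDerivAt_snd)
    have hcomp := hFbig0.comp (t₀, θ₀) hLθ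
    have heqf : (fun q : ℝ × EuclideanSpace ℝ (Fin n) => deriv (fun t => Φ t x₀ q.2) q.1)
        = (fun q : ℝ × EuclideanSpace ℝ (Fin n) × EuclideanSpace ℝ (Fin n) =>
            deriv (fun t' => Φ t' q.2.1 q.2.2) q.1)
          ∘ (fun q : ℝ × EuclideanSpace ℝ (Fin n) => (q.1, (x₀, q.2))) := rfl
    rw [heqf, hcomp.fderiv, ContinuousLinearMap.zero_comp]
  -- critical point information for the x-section
  have hcritx : fderiv ℝ (fun q : ℝ × EuclideanSpace ℝ (Fin n) =>
      deriv (fun t => Φ t q.2 θ₀) q.1) (t₀, x₀) = 0 := by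
    have hLx : HasFDerivAt (fun q : ℝ × EuclideanSpace ℝ (Fin n) =>
        ((q.1, (q.2, θ₀)) : ℝ × EuclideanSpace ℝ (Fin n) × EuclideanSpace ℝ (Fin n)))
        ((ContinuousLinearMap.fst ℝ ℝ (EuclideanSpace ℝ (Fin n))).prod
          ((ContinuousLinearMap.snd ℝ ℝ (EuclideanSpace ℝ (Fin n))).prod
            ((0 : (ℝ × EuclideanSpace ℝ (Fin n)) →L[ℝ] EuclideanSpace ℝ (Fin n))))) (t₀, x₀) :=
      (hasFDerivAt_fst).prodMk (hasFDerivAt_snd.prodMk (hasFDerivAt_const θ₀ (t₀, x₀)))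
    have hcomp := hFbig0.comp (t₀, x₀) hLx
    have heqf : (fun q : ℝ × EuclideanSpace ℝ (Fin n) => deriv (fun t => Φ t q.2 θ₀) q.1)
        = (fun q : ℝ × EuclideanSpace ℝ (Fin n) × EuclideanSpace ℝ (Fin n) =>
            deriv (fun t' => Φ t' q.2.1 q.2.2) q.1)
          ∘ (fun q : ℝ × EuclideanSpace ℝ (Fin n) => (q.1, (q.2, θ₀))) := rfl
    rw [heqf, hcomp.fderiv, ContinuousLinearMap.zero_comp]
  -- the two moving gradients have zero time-derivative at t₀
  have hy' : HasDerivAt (fun t => gradient (fun θ' => Φ t x₀ θ') θ₀) 0 t₀ :=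
    swap_deriv_gradient (fun q : ℝ × EuclideanSpace ℝ (Fin n) => Φ q.1 x₀ q.2)
      (hΦ.comp (contDiff_fst.prodMk (contDiff_const.prodMk contDiff_snd))) t₀ θ₀ hcritθ
  have hx' : HasDerivAt (fun t => gradient (fun x' => Φ t x' θ₀) x₀) 0 t₀ :=
    swap_deriv_gradient (fun q : ℝ × EuclideanSpace ℝ (Fin n) => Φ q.1 q.2 θ₀)
      (hΦ.comp (contDiff_fst.prodMk (contDiff_snd.prodMk contDiff_const))) t₀ x₀ hcritx
  -- the two curves
  set yθ : ℝ → EuclideanSpace ℝ (Fin n) × EuclideanSpace ℝ (Fin n) :=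
    fun t => (gradient (fun θ' => Φ t x₀ θ') θ₀, θ₀) with hyθdef
  set xξ : ℝ → EuclideanSpace ℝ (Fin n) × EuclideanSpace ℝ (Fin n) :=
    fun t => (x₀, gradient (fun x' => Φ t x' θ₀) x₀) with hxξdef
  set ρ₀ : EuclideanSpace ℝ (Fin n) × EuclideanSpace ℝ (Fin n) := yθ t₀ with hρ₀def
  have hρcurve : HasDerivAt yθ 0 t₀ := by
    rw [hyθdef]
    exact hy'.prodMk (hasDerivAt_const t₀ θ₀)
  have hhcurve : HasDerivAt xξ 0 t₀ := by
    rw [hxξdef]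
    exact (hasDerivAt_const t₀ x₀).prodMk hx'
  have hflowcur : ∀ t, flow t (yθ t) = xξ t := fun t => (hrel t x₀ θ₀).symm
  set T : ℝ := |t₀| + 1 with hTdef
  have hT0 : 0 ≤ T := by positivity
  have htIoo : t₀ ∈ Ioo (-T) T := by
    constructor
    · rw [hTdef]; linarith [neg_abs_le t₀]
    · rw [hTdef]; linarith [le_abs_self t₀]
  obtain ⟨C, hC, δ, hδ, Htube⟩ := flow_tube_two w hwlip flow hflow0 hflowD' T hT0 ρ₀
  -- the curve t ↦ flow t ρ₀ has zero derivative at t₀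
  have hflowzero : HasDerivAt (fun t => flow t ρ₀) 0 t₀ := by
    rw [hasDerivAt_iff_isLittleO]
    simp only [smul_zero, sub_zero]
    have h2 : (fun t => yθ t - ρ₀) =o[nhds t₀] (fun t => t - t₀) := by
      have := hasDerivAt_iff_isLittleO.1 hρcurve
      simpa [hρ₀def] using this
    have h1 : (fun t => xξ t - xξ t₀) =o[nhds t₀] (fun t => t - t₀) := by
      have := hasDerivAt_iff_isLittleO.1 hhcurve
      simpa using this
    have h3 : (fun t => flow t ρ₀ - flow t (yθ t)) =O[nhds t₀] (fun t => yθ t - ρ₀) := by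
      rw [isBigO_iff]
      refine ⟨C, ?_⟩
      have hev1 : ∀ᶠ t in nhds t₀, yθ t ∈ closedBall ρ₀ δ :=
        hρcurve.continuousAt.preimage_mem_nhds (Metric.closedBall_mem_nhds _ hδ)
      have hev2 : ∀ᶠ t in nhds t₀, t ∈ Icc (-T) T := by
        filter_upwards [Ioo_mem_nhds htIoo.1 htIoo.2] with u hu
        exact ⟨hu.1.le, hu.2.le⟩
      filter_upwards [hev1, hev2] with t h1t h2t
      have h4 := Htube (yθ t) (Metric.mem_closedBall.1 h1t) t h2t
      calc ‖flow t ρ₀ - flow t (yθ t)‖ = dist (flow t (yθ t)) (flow t ρ₀) := by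
            rw [dist_comm, dist_eq_norm]
        _ ≤ C * dist (yθ t) ρ₀ := h4
        _ = C * ‖yθ t - ρ₀‖ := by rw [dist_eq_norm]
    have h5 := h3.trans_isLittleO h2
    have heq : (fun t => flow t ρ₀ - flow t₀ ρ₀)
        = fun t => (flow t ρ₀ - flow t (yθ t)) + (xξ t - xξ t₀) := by
      funext t
      rw [hflowcur t, hρ₀def, hflowcur t₀]
      abel
    rw [heq]
    exact h5.add h1
  -- the Hamiltonian vector field vanishes at flow t₀ ρ₀ = (x₀, ξ₀)
  have huniq : ((flow t₀ ρ₀).2, -(gradient V (flow t₀ ρ₀).1)) =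
      (0 : EuclideanSpace ℝ (Fin n) × EuclideanSpace ℝ (Fin n)) :=
    (hflowD t₀ ρ₀).unique hflowzero
  have hpt : flow t₀ ρ₀ = (x₀, gradient (fun x' => Φ t₀ x' θ₀) x₀) := by
    rw [hρ₀def, hflowcur t₀, hxξdef]
  rw [hpt] at huniq
  have hξ0 : gradient (fun x' => Φ t₀ x' θ₀) x₀ = 0 := by
    have := congrArg Prod.fst huniq
    simpa using this
  have hVx : gradient V x₀ = 0 := by
    have := congrArg Prod.snd huniq
    simpa using this
  have hpt' : flow t₀ ρ₀ = (x₀, (0 : EuclideanSpace ℝ (Fin n))) := by rw [hpt, hξ0]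
  -- propagate back to time 0 by uniqueness of ODE solutions
  obtain ⟨R1, hR1⟩ :
      ∃ R1, ∀ t ∈ Icc (-T) T, ‖flow t ρ₀‖ ≤ R1 :=
    isCompact_Icc.exists_bound_of_continuousOn
      (continuous_iff_continuousAt.2 fun t => (hflowD t ρ₀).continuousAt).continuousOn
  obtain ⟨K, hK⟩ := hwlip (max R1 ‖((x₀, (0 : EuclideanSpace ℝ (Fin n))) :
    EuclideanSpace ℝ (Fin n) × EuclideanSpace ℝ (Fin n))‖)
  have hwzero : w ((x₀, (0 : EuclideanSpace ℝ (Fin n)))) = 0 := by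
    rw [hwdef]
    simp [hVx]
  have hEq := ODE_solution_unique_of_mem_Icc (v := fun _ => w)
    (s := fun _ => closedBall (0 : EuclideanSpace ℝ (Fin n) × EuclideanSpace ℝ (Fin n))
      (max R1 ‖((x₀, (0 : EuclideanSpace ℝ (Fin n))) :
        EuclideanSpace ℝ (Fin n) × EuclideanSpace ℝ (Fin n))‖)) (K := K)
    (f := fun t => flow t ρ₀)
    (g := fun _ => ((x₀, (0 : EuclideanSpace ℝ (Fin n))) :
      EuclideanSpace ℝ (Fin n) × EuclideanSpace ℝ (Fin n)))
    (a := -T) (b := T) (t₀ := t₀)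
    (fun _ _ => hK) htIoo
    (continuous_iff_continuousAt.2 fun t => (hflowD t ρ₀).continuousAt).continuousOn
    (fun t _ => hflowD' t ρ₀)
    (fun t ht => by
      rw [mem_closedBall_zero_iff]
      exact (hR1 t ⟨ht.1.le, ht.2.le⟩).trans (le_max_left _ _))
    continuousOn_const
    (by
      intro t _
      show HasDerivAt _ (w ((x₀, (0 : EuclideanSpace ℝ (Fin n))) :
        EuclideanSpace ℝ (Fin n) × EuclideanSpace ℝ (Fin n))) t
      rw [hwzero]
      exact hasDerivAt_const t _)
    (fun t _ => by rw [mem_closedBall_zero_iff]; exact le_max_right _ _)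
    hpt'
  have h00 := hEq (show (0 : ℝ) ∈ Icc (-T) T from ⟨by linarith [hT0], hT0⟩)
  have h01 : ((gradient (fun θ' => Φ t₀ x₀ θ') θ₀, θ₀) :
      EuclideanSpace ℝ (Fin n) × EuclideanSpace ℝ (Fin n)) = (x₀, 0) := by
    have h00' : flow 0 ρ₀ = ((x₀, (0 : EuclideanSpace ℝ (Fin n))) :
      EuclideanSpace ℝ (Fin n) × EuclideanSpace ℝ (Fin n)) := h00
    rw [hflow0 ρ₀] at h00'
    exact h00'
  constructor
  · have := congrArg Prod.snd h01
    simpa using this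
  · have hy0x : gradient (fun θ' => Φ t₀ x₀ θ') θ₀ = x₀ := by
      have := congrArg Prod.fst h01
      simpa using this
    rw [hy0x]
    exact hVx
end

section
/- Let (x(t),ξ(t)) be a Hamiltonian trajectory of p = |ξ|²/2 + V with V short-range (|∂^αV(x)| ≤ C⟨x⟩^{-ρ-|α|}, ρ > 1) such that |x(t)| → ∞ as t → +∞ and energy E > 0. Then there exist ξ_∞ ∈ ℝⁿ with |ξ_∞|² = 2E and x_∞ ∈ ℝⁿ such that |x(t) - tξ_∞ - x_∞| → 0 and |ξ(t) - ξ_∞| → 0 as t → +∞. -/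
open Filter Set MeasureTheory
open scoped RealInnerProductSpace

private lemma myMonoAux {f f' : ℝ → ℝ} (h : ∀ t, HasDerivAt f (f' t) t) {a : ℝ}
    (h0 : ∀ t, a ≤ t → 0 ≤ f' t) : MonotoneOn f (Set.Ici a) := by
  apply monotoneOn_of_deriv_nonneg (convex_Ici a)
  · exact Continuous.continuousOn (continuous_iff_continuousAt.2 fun t => (h t).continuousAt)
  · intro t ht
    exact (h t).differentiableAt.differentiableWithinAt
  · intro t ht
    rw [(h t).deriv]
    rw [interior_Ici] at ht
    exact h0 t (le_of_lt ht)

/-- An escaping Hamiltonian trajectory of p = |ξ|²/2 + V with V short range and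
energy E > 0 has asymptotic momentum ξinf (with |ξinf|² = 2E) and asymptotic position xinf:
x(t) - tξinf - xinf → 0 and ξ(t) → ξinf as t → +∞. -/
theorem escaping_trajectory_has_asymptotics {n : ℕ}
    (V : EuclideanSpace ℝ (Fin n) → ℝ) (hV : ContDiff ℝ (⊤ : ℕ∞) V)
    (ρ₀ C : ℝ) (hρ₀ : 1 < ρ₀)
    (hshort : ∀ x : EuclideanSpace ℝ (Fin n),
      |V x| ≤ C * (1 + ‖x‖) ^ (-ρ₀) ∧ ‖gradient V x‖ ≤ C * (1 + ‖x‖) ^ (-ρ₀ - 1))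
    (x ξ : ℝ → EuclideanSpace ℝ (Fin n))
    (hx : ∀ t, HasDerivAt x (ξ t) t)
    (hξ : ∀ t, HasDerivAt ξ (-(gradient V (x t))) t)
    (En : ℝ) (hEn : 0 < En)
    (hE : ∀ t, ‖ξ t‖ ^ 2 / 2 + V (x t) = En)
    (hesc : Tendsto (fun t => ‖x t‖) atTop atTop) :
    ∃ ξinf xinf : EuclideanSpace ℝ (Fin n),
      ‖ξinf‖ ^ 2 = 2 * En ∧
      Tendsto ξ atTop (nhds ξinf) ∧
      Tendsto (fun t => x t - t • ξinf - xinf) atTop (nhds 0) := by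
  have hgradc : Continuous (fun y => gradient V y) := by
    simp only [gradient]
    exact (LinearIsometryEquiv.continuous _).comp (hV.continuous_fderiv (by norm_num))
  have hxc : Continuous x := continuous_iff_continuousAt.2 fun t => (hx t).continuousAt
  have hξc : Continuous ξ := continuous_iff_continuousAt.2 fun t => (hξ t).continuousAt
  have hC0 : 0 ≤ C := by
    have h1 := (hshort 0).1
    have h2 : (1 + ‖(0 : EuclideanSpace ℝ (Fin n))‖) ^ (-ρ₀) = 1 := by
      simp
    rw [h2, mul_one] at h1
    exact le_trans (abs_nonneg _) h1
  have hE2 : ∀ t, ‖ξ t‖ ^ 2 = 2 * En - 2 * V (x t) := fun t => by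
    have := hE t; linarith
  -- decay along the trajectory
  have hB : Tendsto (fun t => (1 + ‖x t‖) ^ (-ρ₀)) atTop (nhds 0) := by
    have := (tendsto_rpow_neg_atTop (y := ρ₀) (by linarith)).comp
      (tendsto_atTop_add_const_left atTop 1 hesc)
    exact this
  have hVx0 : Tendsto (fun t => V (x t)) atTop (nhds 0) := by
    apply squeeze_zero_norm (fun t => le_trans ((hshort (x t)).1) (le_refl _))
    simpa using hB.const_mul C
  -- derivative of ⟪x, ξ⟫
  have hφ : ∀ t, HasDerivAt (fun t => ⟪x t, ξ t⟫)
      (‖ξ t‖ ^ 2 + ⟪x t, -(gradient V (x t))⟫) t := by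
    intro t
    have := (hx t).inner ℝ (hξ t)
    rw [real_inner_self_eq_norm_sq] at this
    simpa only [add_comm] using this
  have hψ : ∀ t, HasDerivAt (fun t => ⟪x t, x t⟫) (2 * ⟪x t, ξ t⟫) t := by
    intro t
    have := (hx t).inner ℝ (hx t)
    rw [real_inner_comm (x t) (ξ t)] at this
    simpa only [real_inner_comm (ξ t) (x t), ← two_mul] using this
  -- pointwise derivative lower bound when the decay term is small
  have hder : ∀ t, 3 * C * ((1 + ‖x t‖) ^ (-ρ₀)) ≤ En →
      En ≤ ‖ξ t‖ ^ 2 + ⟪x t, -(gradient V (x t))⟫ := by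
    intro t hsmall
    have hpos : (0:ℝ) < 1 + ‖x t‖ := by positivity
    have hBpos : (0:ℝ) < (1 + ‖x t‖) ^ (-ρ₀) := Real.rpow_pos_of_pos hpos _
    have hmul : (1 + ‖x t‖) ^ (-ρ₀ - 1) * (1 + ‖x t‖) = (1 + ‖x t‖) ^ (-ρ₀) := by
      rw [← Real.rpow_add_one hpos.ne']
      ring_nf
    have hgb := (hshort (x t)).2
    have hVb := (hshort (x t)).1
    have hinner : |⟪x t, gradient V (x t)⟫| ≤ ‖x t‖ * ‖gradient V (x t)‖ :=
      abs_real_inner_le_norm _ _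
    have h1 : ‖x t‖ * ‖gradient V (x t)‖ ≤ C * (1 + ‖x t‖) ^ (-ρ₀) := by
      calc ‖x t‖ * ‖gradient V (x t)‖ ≤ (1 + ‖x t‖) * (C * (1 + ‖x t‖) ^ (-ρ₀ - 1)) := by
            apply mul_le_mul (by linarith [norm_nonneg (x t)]) hgb (norm_nonneg _) hpos.le
        _ = C * ((1 + ‖x t‖) ^ (-ρ₀ - 1) * (1 + ‖x t‖)) := by ring
        _ = C * (1 + ‖x t‖) ^ (-ρ₀) := by rw [hmul]
    have h2 : ⟪x t, -(gradient V (x t))⟫ = -⟪x t, gradient V (x t)⟫ := by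
      simp [inner_neg_right]
    have h3 := hE2 t
    have h4 : |V (x t)| ≤ C * (1 + ‖x t‖) ^ (-ρ₀) := hVb
    rw [h2]
    have habs1 := abs_le.1 hinner
    have habs2 := abs_le.1 h4
    nlinarith
  have hev1 : ∀ᶠ t in atTop, En ≤ ‖ξ t‖ ^ 2 + ⟪x t, -(gradient V (x t))⟫ := by
    have h0 := hB.const_mul (3 * C)
    rw [mul_zero] at h0
    have := h0.eventually_lt_const hEn
    filter_upwards [this] with t ht
    exact hder t ht.le
  obtain ⟨T₀, hT₀⟩ := eventually_atTop.mp hev1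
  -- first monotonicity : ⟪x,ξ⟫ grows linearly
  set a : ℝ := ⟪x T₀, ξ T₀⟫ - En * T₀ with ha
  have hmono1 : MonotoneOn (fun t => ⟪x t, ξ t⟫ - En * t) (Ici T₀) := by
    apply myMonoAux (f' := fun t => (‖ξ t‖ ^ 2 + ⟪x t, -(gradient V (x t))⟫) - En)
    · intro t
      exact ((hφ t).sub (by simpa using (hasDerivAt_id t).const_mul En))
    · intro t ht
      linarith [hT₀ t ht]
  have hlin : ∀ t, T₀ ≤ t → En * t + a ≤ ⟪x t, ξ t⟫ := by
    intro t ht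
    have := hmono1 (self_mem_Ici) ht ht
    simp only [ha] at this ⊢
    linarith
  -- second monotonicity : ‖x‖² grows quadratically
  set b : ℝ := ⟪x T₀, x T₀⟫ - (En * T₀ ^ 2 + 2 * a * T₀) with hb
  have hmono2 : MonotoneOn (fun t => ⟪x t, x t⟫ - (En * t ^ 2 + 2 * a * t)) (Ici T₀) := by
    apply myMonoAux (f' := fun t => 2 * ⟪x t, ξ t⟫ - (En * (2 * t) + 2 * a))
    · intro t
      have hq : HasDerivAt (fun t : ℝ => En * t ^ 2 + 2 * a * t) (En * (2 * t) + 2 * a) t := by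
        have h1 : HasDerivAt (fun t : ℝ => t ^ 2) (2 * t) t := by
          simpa using hasDerivAt_pow 2 t
        have h2 := (h1.const_mul En).add ((hasDerivAt_id t).const_mul (2 * a))
        simpa [Pi.add_def] using h2
      exact (hψ t).sub hq
    · intro t ht
      have := hlin t ht
      linarith
  have hquad : ∀ t, T₀ ≤ t → En * t ^ 2 + 2 * a * t + b ≤ ‖x t‖ ^ 2 := by
    intro t ht
    have h5 := hmono2 (self_mem_Ici) ht ht
    simp only [hb, real_inner_self_eq_norm_sq] at h5 ⊢
    linarith
  -- eventual linear lower bound on ‖x t‖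
  set c : ℝ := Real.sqrt (En / 2) with hcdef
  have hc : 0 < c := Real.sqrt_pos.2 (by linarith)
  have hpoly : Tendsto (fun t : ℝ => En / 2 * t ^ 2 + 2 * a * t + b) atTop atTop := by
    have h1 : Tendsto (fun t : ℝ => En / 2 * t + 2 * a) atTop atTop :=
      tendsto_atTop_add_const_right _ _ (tendsto_id.const_mul_atTop (by linarith))
    have h2 : Tendsto (fun t : ℝ => t * (En / 2 * t + 2 * a)) atTop atTop :=
      tendsto_id.atTop_mul_atTop₀ h1
    have h3 := tendsto_atTop_add_const_right _ b h2
    refine h3.congr fun t => by ring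
  have hgrow : ∀ᶠ t in atTop, c * t ≤ ‖x t‖ ∧ 1 ≤ t := by
    filter_upwards [eventually_ge_atTop T₀, eventually_ge_atTop (1:ℝ),
      hpoly.eventually_ge_atTop 0] with t ht0 ht1 htp
    refine ⟨?_, ht1⟩
    have h1 := hquad t ht0
    have h2 : En / 2 * t ^ 2 ≤ ‖x t‖ ^ 2 := by nlinarith [h1, htp]
    have h3 : c * t = Real.sqrt (En / 2 * t ^ 2) := by
      rw [Real.sqrt_mul (by linarith), Real.sqrt_sq (by linarith)]
    rw [h3]
    calc Real.sqrt (En / 2 * t ^ 2) ≤ Real.sqrt (‖x t‖ ^ 2) := Real.sqrt_le_sqrt h2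
      _ = ‖x t‖ := Real.sqrt_sq (norm_nonneg _)
  obtain ⟨T₁, hT₁⟩ := eventually_atTop.mp hgrow
  set T : ℝ := max T₁ 1 with hTdef
  have hT0 : (0:ℝ) < T := lt_of_lt_of_le one_pos (le_max_right _ _)
  have hTprop : ∀ t, T ≤ t → c * t ≤ ‖x t‖ ∧ 1 ≤ t := fun t ht =>
    hT₁ t (le_trans (le_max_left _ _) ht)
  -- the force term and its bound
  set F : ℝ → EuclideanSpace ℝ (Fin n) := fun s => -(gradient V (x s)) with hFdef
  have contF : Continuous F := (hgradc.comp hxc).neg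
  set C₂ : ℝ := C * c ^ (-ρ₀ - 1) with hC₂
  have hC₂0 : 0 ≤ C₂ := mul_nonneg hC0 (Real.rpow_nonneg hc.le _)
  have hFb : ∀ s, T ≤ s → ‖F s‖ ≤ C₂ * s ^ (-ρ₀ - 1) := by
    intro s hs
    obtain ⟨hcs, hs1⟩ := hTprop s hs
    have hspos : (0:ℝ) < s := lt_of_lt_of_le one_pos hs1
    have h1 : ‖F s‖ ≤ C * (1 + ‖x s‖) ^ (-ρ₀ - 1) := by
      simpa [hFdef] using (hshort (x s)).2
    have h2 : (1 + ‖x s‖) ^ (-ρ₀ - 1) ≤ (c * s) ^ (-ρ₀ - 1) := by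
      apply Real.rpow_le_rpow_of_nonpos (mul_pos hc hspos) (by linarith) (by linarith)
    have h3 : (c * s) ^ (-ρ₀ - 1) = c ^ (-ρ₀ - 1) * s ^ (-ρ₀ - 1) :=
      Real.mul_rpow hc.le hspos.le
    calc ‖F s‖ ≤ C * (1 + ‖x s‖) ^ (-ρ₀ - 1) := h1
      _ ≤ C * ((c * s) ^ (-ρ₀ - 1)) := mul_le_mul_of_nonneg_left h2 hC0
      _ = C₂ * s ^ (-ρ₀ - 1) := by rw [h3, hC₂]; ring
  have hrint : IntegrableOn (fun s : ℝ => C₂ * s ^ (-ρ₀ - 1)) (Ioi T) :=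
    (integrableOn_Ioi_rpow_of_lt (by linarith) hT0).const_mul C₂
  have hFint : IntegrableOn F (Ioi T) := by
    apply hrint.mono' contF.aestronglyMeasurable
    rw [ae_restrict_iff' measurableSet_Ioi]
    exact ae_of_all _ fun s hs => hFb s (le_of_lt hs)
  -- FTC for ξ
  have key : ∀ p q : ℝ, ∫ s in p..q, F s = ξ q - ξ p := fun p q =>
    intervalIntegral.integral_eq_sub_of_hasDerivAt (fun s _ => hξ s)
      (contF.intervalIntegrable p q)
  set ξinf : EuclideanSpace ℝ (Fin n) := ξ T + ∫ s in Ioi T, F s with hξinf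
  have hξconv : Tendsto ξ atTop (nhds ξinf) := by
    have h := intervalIntegral_tendsto_integral_Ioi T hFint tendsto_id
    have h2 := (tendsto_const_nhds (x := ξ T) (f := atTop)).add h
    refine h2.congr fun t => ?_
    simp only [id_eq]
    rw [key T t]
    abel
  -- tail formula
  have htail : ∀ t, T ≤ t → ξinf - ξ t = ∫ s in Ioi t, F s := by
    intro t ht
    have hint' : IntegrableOn F (Ioi t) := hFint.mono_set (Ioi_subset_Ioi ht)
    have h1 := intervalIntegral_tendsto_integral_Ioi t hint' tendsto_id
    have h2 : Tendsto (fun u => ∫ s in t..u, F s) atTop (nhds (ξinf - ξ t)) :=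
      (hξconv.sub_const (ξ t)).congr fun u => (key t u).symm
    exact tendsto_nhds_unique h2 h1
  -- tail bound
  have hξb : ∀ t, T ≤ t → ‖ξ t - ξinf‖ ≤ C₂ / ρ₀ * t ^ (-ρ₀) := by
    intro t ht
    have htpos : (0:ℝ) < t := lt_of_lt_of_le hT0 ht
    have hint' : IntegrableOn F (Ioi t) := hFint.mono_set (Ioi_subset_Ioi ht)
    have hbint : IntegrableOn (fun s : ℝ => C₂ * s ^ (-ρ₀ - 1)) (Ioi t) :=
      hrint.mono_set (Ioi_subset_Ioi ht)
    rw [norm_sub_rev, htail t ht]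
    calc ‖∫ s in Ioi t, F s‖ ≤ ∫ s in Ioi t, ‖F s‖ := norm_integral_le_integral_norm _
      _ ≤ ∫ s in Ioi t, C₂ * s ^ (-ρ₀ - 1) := by
          apply setIntegral_mono_on hint'.norm hbint measurableSet_Ioi
          intro s hs
          exact hFb s (le_trans ht (le_of_lt hs))
      _ = C₂ * ∫ s in Ioi t, s ^ (-ρ₀ - 1) := integral_const_mul _ _
      _ = C₂ * (-t ^ (-ρ₀ - 1 + 1) / (-ρ₀ - 1 + 1)) := by
          rw [integral_Ioi_rpow_of_lt (by linarith) htpos]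
      _ = C₂ / ρ₀ * t ^ (-ρ₀) := by
          have : -ρ₀ - 1 + 1 = -ρ₀ := by ring
          rw [this]
          field_simp
  -- now the position
  set G : ℝ → EuclideanSpace ℝ (Fin n) := fun s => ξ s - ξinf with hGdef
  have contG : Continuous G := hξc.sub continuous_const
  have hgint : IntegrableOn (fun s : ℝ => C₂ / ρ₀ * s ^ (-ρ₀)) (Ioi T) :=
    (integrableOn_Ioi_rpow_of_lt (by linarith) hT0).const_mul _
  have hGint : IntegrableOn G (Ioi T) := by
    apply hgint.mono' contG.aestronglyMeasurable
    rw [ae_restrict_iff' measurableSet_Ioi]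
    exact ae_of_all _ fun s hs => hξb s (le_of_lt hs)
  have hh : ∀ t, HasDerivAt (fun t => x t - t • ξinf) (G t) t := by
    intro t
    exact (hx t).sub (by simpa using (hasDerivAt_id t).smul_const ξinf)
  have keyh : ∀ p q : ℝ, ∫ s in p..q, G s = (x q - q • ξinf) - (x p - p • ξinf) := fun p q =>
    intervalIntegral.integral_eq_sub_of_hasDerivAt (fun s _ => hh s)
      (contG.intervalIntegrable p q)
  set xinf : EuclideanSpace ℝ (Fin n) := (x T - T • ξinf) + ∫ s in Ioi T, G s with hxinf
  have hhconv : Tendsto (fun t => x t - t • ξinf) atTop (nhds xinf) := by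
    have h := intervalIntegral_tendsto_integral_Ioi T hGint tendsto_id
    have h2 := (tendsto_const_nhds (x := x T - T • ξinf) (f := atTop)).add h
    refine h2.congr fun t => ?_
    simp only [id_eq]
    rw [keyh T t]
    abel
  -- norm of limit
  have hns : ‖ξinf‖ ^ 2 = 2 * En := by
    have h1 : Tendsto (fun t => ‖ξ t‖ ^ 2) atTop (nhds (‖ξinf‖ ^ 2)) :=
      (hξconv.norm).pow 2
    have h2 : Tendsto (fun t => ‖ξ t‖ ^ 2) atTop (nhds (2 * En)) := by
      have h3 := (tendsto_const_nhds (x := 2 * En) (f := atTop)).sub (hVx0.const_mul 2)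
      simp only [mul_zero, sub_zero] at h3
      exact h3.congr fun t => (hE2 t).symm
    exact tendsto_nhds_unique h1 h2
  exact ⟨ξinf, xinf, hns, hξconv, tendsto_sub_nhds_zero_iff.2 hhconv⟩
end
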